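/- Let 0 < γ ≤ 1, β ≥ γ, β > 0, and let H : [0,1]×[0,1] → ℝ be continuous with ‖H‖_∞ = sup |H|. Then the cordial Volterra integral operator (Ky)(t) = ∫₀ᵗ t^{-β}(t-s)^{γ-1} s^{β-γ} H(t,s) y(s) ds is a bounded linear operator on C[0,1] with operator norm at most ‖H‖_∞ · B(γ, β-γ+1), where B is the Beta function. -/

import Mathlib

open MeasureTheory Real

noncomputable def Beta (a b : ℝ) : ℝ := ∫ x in (0:ℝ)..1, x ^ (a - 1) * (1 - x) ^ (b - 1)

/-- the cordial Volterra integral operator with continuous kernel `H` is bounded on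
`C[0,1]`: for every continuous `y` and `t ∈ (0,1]`, `|Ky(t)| ≤ ‖H‖_∞ ‖y‖_∞ B(γ, β-γ+1)`,
so its operator norm is at most `‖H‖_∞ · B(γ, β-γ+1)`. -/
theorem cordial_operator_bounded (γ β : ℝ) (hγ0 : 0 < γ) (hγ1 : γ ≤ 1) (hβγ : γ ≤ β)
    (hβ : 0 < β) (H : ℝ → ℝ → ℝ)
    (hH : ContinuousOn (fun p : ℝ × ℝ => H p.1 p.2) (Set.Icc 0 1 ×ˢ Set.Icc 0 1))
    (y : ℝ → ℝ) (hy : ContinuousOn y (Set.Icc 0 1)) (t : ℝ) (ht : t ∈ Set.Ioc (0:ℝ) 1) :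
    |∫ s in (0:ℝ)..t, t ^ (-β) * (t - s) ^ (γ - 1) * s ^ (β - γ) * H t s * y s|
      ≤ (⨆ p : Set.Icc (0:ℝ) 1 × Set.Icc (0:ℝ) 1, |H p.1 p.2|) *
        (⨆ s : Set.Icc (0:ℝ) 1, |y s|) * Beta γ (β - γ + 1) := by
  obtain ⟨ht0, ht1⟩ := ht
  set M := (⨆ p : Set.Icc (0:ℝ) 1 × Set.Icc (0:ℝ) 1, |H p.1 p.2|) with hMdef
  set N := (⨆ s : Set.Icc (0:ℝ) 1, |y s|) with hNdef
  have h01 : (0:ℝ) ∈ Set.Icc (0:ℝ) 1 := by norm_num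
  have hKc : IsCompact ((Set.Icc (0:ℝ) 1) ×ˢ (Set.Icc (0:ℝ) 1)) :=
    isCompact_Icc.prod isCompact_Icc
  have hHb : BddAbove (Set.range fun p : Set.Icc (0:ℝ) 1 × Set.Icc (0:ℝ) 1 => |H p.1 p.2|) := by
    refine (hKc.image_of_continuousOn hH.abs).bddAbove.mono ?_
    rintro x ⟨p, rfl⟩
    exact ⟨(p.1.1, p.2.1), ⟨p.1.2, p.2.2⟩, rfl⟩
  have hyb : BddAbove (Set.range fun s : Set.Icc (0:ℝ) 1 => |y s|) := by
    refine (isCompact_Icc.image_of_continuousOn hy.abs).bddAbove.mono ?_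
    rintro x ⟨s, rfl⟩
    exact ⟨s.1, s.2, rfl⟩
  have hHle : ∀ a b : ℝ, a ∈ Set.Icc (0:ℝ) 1 → b ∈ Set.Icc (0:ℝ) 1 → |H a b| ≤ M :=
    fun a b ha hb => le_ciSup hHb (⟨a, ha⟩, ⟨b, hb⟩)
  have hyle : ∀ s : ℝ, s ∈ Set.Icc (0:ℝ) 1 → |y s| ≤ N := fun s hs => le_ciSup hyb ⟨s, hs⟩
  have hM0 : 0 ≤ M := le_trans (abs_nonneg _) (hHle 0 0 h01 h01)
  have hN0 : 0 ≤ N := le_trans (abs_nonneg _) (hyle 0 h01)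
  -- integrability of the base function
  have hbase : IntervalIntegrable (fun s => (t - s) ^ (γ - 1) * s ^ (β - γ)) volume 0 t := by
    have h1 : IntervalIntegrable (fun s : ℝ => s ^ (γ - 1)) volume 0 t :=
      intervalIntegral.intervalIntegrable_rpow' (by linarith)
    have h2 := h1.comp_sub_left t
    simp only [sub_self, sub_zero] at h2
    refine (h2.symm.mul_continuousOn ?_)
    intro s _
    exact (Real.continuousAt_rpow_const s (β - γ) (Or.inr (by linarith))).continuousWithinAt
  have hbound : IntervalIntegrable
      (fun s => M * N * t ^ (-β) * ((t - s) ^ (γ - 1) * s ^ (β - γ))) volume 0 t :=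
    hbase.const_mul _
  -- pointwise bound and first estimate
  have key : |∫ s in (0:ℝ)..t, t ^ (-β) * (t - s) ^ (γ - 1) * s ^ (β - γ) * H t s * y s|
      ≤ |∫ s in (0:ℝ)..t, M * N * t ^ (-β) * ((t - s) ^ (γ - 1) * s ^ (β - γ))| := by
    rw [← Real.norm_eq_abs]
    refine intervalIntegral.norm_integral_le_abs_of_norm_le ?_ hbound
    filter_upwards [ae_restrict_mem measurableSet_uIoc] with s hs
    rw [Set.uIoc_of_le ht0.le] at hs
    obtain ⟨hs0, hst⟩ := hs
    have ha1 : (0:ℝ) ≤ t ^ (-β) := Real.rpow_nonneg ht0.le _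
    have ha2 : (0:ℝ) ≤ (t - s) ^ (γ - 1) := Real.rpow_nonneg (by linarith) _
    have ha3 : (0:ℝ) ≤ s ^ (β - γ) := Real.rpow_nonneg hs0.le _
    have hHts : |H t s| ≤ M := hHle t s ⟨ht0.le, ht1⟩ ⟨hs0.le, hst.trans ht1⟩
    have hys : |y s| ≤ N := hyle s ⟨hs0.le, hst.trans ht1⟩
    calc ‖t ^ (-β) * (t - s) ^ (γ - 1) * s ^ (β - γ) * H t s * y s‖
        = t ^ (-β) * (t - s) ^ (γ - 1) * s ^ (β - γ) * (|H t s| * |y s|) := by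
          rw [Real.norm_eq_abs, abs_mul, abs_mul, abs_mul, abs_mul,
            abs_of_nonneg ha1, abs_of_nonneg ha2, abs_of_nonneg ha3]
          ring
      _ ≤ t ^ (-β) * (t - s) ^ (γ - 1) * s ^ (β - γ) * (M * N) := by
          have := mul_le_mul hHts hys (abs_nonneg _) hM0
          exact mul_le_mul_of_nonneg_left this (by positivity)
      _ = M * N * t ^ (-β) * ((t - s) ^ (γ - 1) * s ^ (β - γ)) := by ring
  -- compute the base integral
  have hBeta : (∫ u in (0:ℝ)..1, (1 - u) ^ (γ - 1) * u ^ (β - γ)) = Beta γ (β - γ + 1) := by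
    rw [Beta]
    have := intervalIntegral.integral_comp_sub_left (a := 0) (b := 1)
      (fun u : ℝ => (1 - u) ^ (γ - 1) * u ^ (β - γ)) 1
    simp only [sub_self, sub_zero] at this
    rw [← this]
    congr 1
    ext x
    rw [sub_sub_cancel]
    ring_nf
  have hI : (∫ s in (0:ℝ)..t, (t - s) ^ (γ - 1) * s ^ (β - γ))
      = t ^ β * Beta γ (β - γ + 1) := by
    have hsub := intervalIntegral.integral_comp_mul_right (a := 0) (b := 1)
      (fun s => (t - s) ^ (γ - 1) * s ^ (β - γ)) (c := t) ht0.ne'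
    simp only [zero_mul, one_mul, smul_eq_mul] at hsub
    have hL : (∫ u in (0:ℝ)..1, (t - u * t) ^ (γ - 1) * (u * t) ^ (β - γ))
        = t ^ (β - 1) * ∫ u in (0:ℝ)..1, (1 - u) ^ (γ - 1) * u ^ (β - γ) := by
      rw [← intervalIntegral.integral_const_mul]
      apply intervalIntegral.integral_congr
      intro u hu
      rw [Set.uIcc_of_le (by norm_num : (0:ℝ) ≤ 1)] at hu
      obtain ⟨hu0, hu1⟩ := hu
      show (t - u * t) ^ (γ - 1) * (u * t) ^ (β - γ)
          = t ^ (β - 1) * ((1 - u) ^ (γ - 1) * u ^ (β - γ))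
      have e1 : t - u * t = t * (1 - u) := by ring
      rw [e1, Real.mul_rpow ht0.le (by linarith : (0:ℝ) ≤ 1 - u), mul_comm u t,
        Real.mul_rpow ht0.le hu0]
      have e2 : t ^ (γ - 1) * t ^ (β - γ) = t ^ (β - 1) := by
        rw [← Real.rpow_add ht0]; ring_nf
      rw [← e2]; ring
    have hIeq : (∫ s in (0:ℝ)..t, (t - s) ^ (γ - 1) * s ^ (β - γ))
        = t * ∫ u in (0:ℝ)..1, (t - u * t) ^ (γ - 1) * (u * t) ^ (β - γ) := by
      rw [hsub, ← mul_assoc, mul_inv_cancel₀ ht0.ne', one_mul]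
    rw [hIeq, hL, hBeta, ← mul_assoc]
    congr 1
    nth_rewrite 1 [← Real.rpow_one t]
    rw [← Real.rpow_add ht0]
    ring_nf
  refine key.trans ?_
  rw [intervalIntegral.integral_const_mul, hI]
  have htt : t ^ (-β) * t ^ β = 1 := by
    rw [← Real.rpow_add ht0]; simp
  rw [show M * N * t ^ (-β) * (t ^ β * Beta γ (β - γ + 1))
      = M * N * Beta γ (β - γ + 1) * (t ^ (-β) * t ^ β) by ring, htt, mul_one]
  have hB0 : 0 ≤ Beta γ (β - γ + 1) := by
    rw [Beta]
    apply intervalIntegral.integral_nonneg (by norm_num)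
    intro u hu
    exact mul_nonneg (Real.rpow_nonneg hu.1 _) (Real.rpow_nonneg (by linarith [hu.2]) _)
  rw [abs_of_nonneg (mul_nonneg (mul_nonneg hM0 hN0) hB0)]
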